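/- Let γ be a contour consisting of two horizontal rays Im t = ±δ for Re t ≤ 0 joined by a semicircle in the right half-plane around 0, with Re t ≤ b on γ for some fixed b, and let α > 0. Then there exists C > 0 such that |Γ(t) e^{−α t²/2 + x(t − 1/2)}| ≤ C e^{−C|t|²} for all t ∈ γ with |t| sufficiently large, uniformly in x > 0. -/

import Mathlib

open Complex MeasureTheory Set

lemma my_norm_Gamma_le {s : ℂ} (hs : 0 < s.re) :
    ‖Complex.Gamma s‖ ≤ Real.Gamma s.re := by
  rw [Complex.Gamma_eq_integral hs, Complex.GammaIntegral,
    Real.Gamma_eq_integral hs]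
  refine (norm_integral_le_integral_norm _).trans_eq ?_
  refine setIntegral_congr_fun measurableSet_Ioi fun x hx => ?_
  rw [norm_mul, Complex.norm_of_nonneg (Real.exp_pos _).le,
    Complex.norm_cpow_eq_rpow_re_of_pos hx]
  simp

lemma my_Gamma_le_one {x : ℝ} (h1 : 1 ≤ x) (h2 : x ≤ 2) : Real.Gamma x ≤ 1 := by
  have h := Real.convexOn_Gamma.2 (mem_Ioi.2 one_pos) (mem_Ioi.2 two_pos)
    (by linarith : (0:ℝ) ≤ 2 - x) (by linarith : (0:ℝ) ≤ x - 1) (by ring)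
  simp only [smul_eq_mul, Real.Gamma_one, Real.Gamma_two] at h
  have : (2 - x) * 1 + (x - 1) * 2 = x := by ring
  rw [this] at h
  linarith

lemma my_gamma_strip (δ : ℝ) (hδ : 0 < δ) :
    ∀ n : ℕ, ∀ t : ℂ, δ ≤ |t.im| → 1 - (n : ℝ) ≤ t.re → t.re ≤ 2 →
      ‖Complex.Gamma t‖ ≤ (max 1 δ⁻¹) ^ n := by
  intro n
  induction n with
  | zero =>
    intro t him h1 h2
    simp only [Nat.cast_zero, sub_zero] at h1
    simpa using (my_norm_Gamma_le (by linarith : 0 < t.re)).trans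
      (my_Gamma_le_one h1 h2)
  | succ n ih =>
    intro t him h1 h2
    by_cases h : 1 - (n : ℝ) ≤ t.re
    · exact (ih t him h h2).trans
        (pow_le_pow_right₀ (le_max_left _ _) (Nat.le_succ n))
    · push_neg at h
      have ht0 : t ≠ 0 := by
        intro h0
        rw [h0] at him
        simp at him
        linarith
      have hrec : Complex.Gamma t = Complex.Gamma (t + 1) / t := by
        rw [Complex.Gamma_add_one t ht0]
        field_simp
      have hb : ‖Complex.Gamma (t + 1)‖ ≤ (max 1 δ⁻¹) ^ n := by
        refine ih (t + 1) (by simpa using him) ?_ ?_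
        · simp only [Complex.add_re, Complex.one_re]
          push_cast at h1 ⊢
          linarith
        · simp only [Complex.add_re, Complex.one_re]
          have : (n : ℝ) ≥ 0 := Nat.cast_nonneg n
          linarith
      have hnt : δ ≤ ‖t‖ := him.trans (Complex.abs_im_le_norm t)
      rw [hrec, norm_div]
      have h1t : ‖t‖⁻¹ ≤ max 1 δ⁻¹ := by
        refine le_trans ?_ (le_max_right _ _)
        exact inv_anti₀ hδ hnt
      calc ‖Complex.Gamma (t + 1)‖ / ‖t‖
          = ‖Complex.Gamma (t + 1)‖ * ‖t‖⁻¹ := div_eq_mul_inv _ _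
        _ ≤ (max 1 δ⁻¹) ^ n * max 1 δ⁻¹ := by
            apply mul_le_mul hb h1t (inv_nonneg.2 (norm_nonneg t))
            positivity
        _ = (max 1 δ⁻¹) ^ (n + 1) := by ring

set_option maxHeartbeats 1000000


open Complex

/-- Gaussian decay on the horizontal rays of the contour `γ`: for fixed `α > 0` and
`δ > 0`, there is `C > 0` and a radius `R` such that for every point `t` on the rays
`Im t = ±δ`, `Re t ≤ 0`, with `|t| ≥ R`, one has
`|Γ(t) e^{−α t²/2 + x(t − 1/2)}| ≤ C e^{−C|t|²}` uniformly in `x > 0`. -/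
theorem gamma_gaussian_decay_on_rays (α δ : ℝ) (hα : 0 < α) (hδ : 0 < δ) :
    ∃ C > 0, ∃ R : ℝ, ∀ t : ℂ, (t.im = δ ∨ t.im = -δ) → t.re ≤ 0 → R ≤ ‖t‖ →
      ∀ x : ℝ, 0 < x →
        ‖Complex.Gamma t * Complex.exp (-(α : ℂ) * t ^ 2 / 2 + (x : ℂ) * (t - 1 / 2))‖
          ≤ C * Real.exp (-C * ‖t‖ ^ 2) := by
  obtain ⟨m, hm⟩ : ∃ m : ℝ, m = max 1 δ⁻¹ := ⟨_, rfl⟩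
  have hm1 : (1 : ℝ) ≤ m := by rw [hm]; exact le_max_left _ _
  have hm0 : (0 : ℝ) < m := lt_of_lt_of_le one_pos hm1
  obtain ⟨L, hLdef⟩ : ∃ L : ℝ, L = Real.log m := ⟨_, rfl⟩
  have hL : 0 ≤ L := hLdef ▸ Real.log_nonneg hm1
  obtain ⟨K, hKdef⟩ : ∃ K : ℝ, K = m ^ 2 * Real.exp (α * δ ^ 2) := ⟨_, rfl⟩
  have hK : 0 < K := by rw [hKdef]; positivity
  have hmax : (0 : ℝ) ≤ max 0 (Real.log (4 * K / α)) := le_max_left _ _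
  refine ⟨α / 4, by linarith, 1 + 8 * L / α + (8 / α) * max 0 (Real.log (4 * K / α)), ?_⟩
  intro t him hre hR x hx
  obtain ⟨s, hs⟩ : ∃ s : ℝ, s = ‖t‖ := ⟨_, rfl⟩
  rw [← hs] at hR ⊢
  have hs0 : 0 ≤ s := hs ▸ norm_nonneg t
  have hs1 : 1 ≤ s := by
    have h1 : 0 ≤ 8 * L / α := by positivity
    have h2 : 0 ≤ (8 / α) * max 0 (Real.log (4 * K / α)) := by positivity
    linarith
  have habs : |t.im| = δ := by
    rcases him with h | h <;> rw [h] <;> simp [abs_of_pos hδ, hδ.le]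
  -- bound on Gamma
  obtain ⟨n, hn⟩ : ∃ n : ℕ, n = ⌈-t.re⌉₊ + 1 := ⟨_, rfl⟩
  have hceil : -t.re ≤ (⌈-t.re⌉₊ : ℝ) := Nat.le_ceil _
  have h1n : 1 - (n : ℝ) ≤ t.re := by rw [hn]; push_cast; linarith
  have hGam : ‖Complex.Gamma t‖ ≤ m ^ n := by
    rw [hm]
    exact my_gamma_strip δ hδ n t (le_of_eq habs.symm) h1n (by linarith)
  have hre_abs : -t.re ≤ s := by
    have h := Complex.abs_re_le_norm t
    rw [abs_le] at h
    have hsa : ‖t‖ = s := by rw [hs]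
    linarith [h.1]
  have hns : (n : ℝ) ≤ s + 2 := by
    have := Nat.ceil_lt_add_one (neg_nonneg.2 hre)
    rw [hn]
    push_cast
    linarith
  have hGam2 : ‖Complex.Gamma t‖ ≤ Real.exp ((s + 2) * L) := by
    refine hGam.trans ?_
    have hmexp : m = Real.exp L := by rw [hLdef, Real.exp_log hm0]
    rw [hmexp, ← Real.exp_nat_mul]
    exact Real.exp_le_exp.mpr (by nlinarith)
  -- real part of the exponent
  have hwre : (-(α : ℂ) * t ^ 2 / 2 + (x : ℂ) * (t - 1 / 2)).re
      = -α * (t.re ^ 2 - t.im ^ 2) / 2 + x * (t.re - 1 / 2) := by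
    simp [pow_two, Complex.add_re, Complex.div_re, Complex.mul_re, Complex.mul_im,
      Complex.normSq_apply, Complex.sub_re, Complex.sub_im, Complex.ofReal_re,
      Complex.ofReal_im]
    try ring
  have him2 : t.im ^ 2 = δ ^ 2 := by rcases him with h | h <;> rw [h] <;> ring
  have hs2 : s ^ 2 = t.re ^ 2 + δ ^ 2 := by
    rw [hs, Complex.sq_norm, Complex.normSq_apply, ← him2]
    ring
  have hwre2 : (-(α : ℂ) * t ^ 2 / 2 + (x : ℂ) * (t - 1 / 2)).re
      ≤ -(α / 2) * s ^ 2 + α * δ ^ 2 := by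
    rw [hwre]
    have hx2 : x * (t.re - 1 / 2) ≤ 0 :=
      mul_nonpos_of_nonneg_of_nonpos hx.le (by linarith)
    nlinarith
  have hKexp : K = Real.exp (2 * L + α * δ ^ 2) := by
    rw [hKdef, Real.exp_add, ← Real.exp_log hm0, ← Real.exp_nat_mul, ← hLdef]
    norm_num [mul_comm]
  have hbound : ‖Complex.Gamma t * Complex.exp (-(α : ℂ) * t ^ 2 / 2 + (x : ℂ) * (t - 1 / 2))‖
      ≤ K * Real.exp (L * s - α / 2 * s ^ 2) := by
    have hexp : ‖Complex.exp (-(α : ℂ) * t ^ 2 / 2 + (x : ℂ) * (t - 1 / 2))‖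
        = Real.exp ((-(α : ℂ) * t ^ 2 / 2 + (x : ℂ) * (t - 1 / 2)).re) := by
      rw [Complex.norm_exp]
    rw [norm_mul, hexp]
    have step : ‖Complex.Gamma t‖ * Real.exp ((-(α : ℂ) * t ^ 2 / 2 + (x : ℂ) * (t - 1 / 2)).re)
        ≤ Real.exp ((s + 2) * L) * Real.exp (-(α / 2) * s ^ 2 + α * δ ^ 2) :=
      mul_le_mul hGam2 (Real.exp_le_exp.mpr hwre2) (Real.exp_pos _).le (Real.exp_pos _).le
    have step2 : Real.exp ((s + 2) * L) * Real.exp (-(α / 2) * s ^ 2 + α * δ ^ 2)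
        = K * Real.exp (L * s - α / 2 * s ^ 2) := by
      rw [hKexp, ← Real.exp_add, ← Real.exp_add]
      congr 1
      ring
    rw [← step2]
    exact step
  refine hbound.trans ?_
  -- final elementary estimate
  have h8L : 8 * L / α ≤ s := by
    have h2 : 0 ≤ (8 / α) * max 0 (Real.log (4 * K / α)) := by positivity
    linarith
  have hlog : Real.log (4 * K / α) ≤ α / 8 * s ^ 2 := by
    have h1 : (8 / α) * max 0 (Real.log (4 * K / α)) ≤ s := by
      have h2 : 0 ≤ 8 * L / α := by positivity
      linarith
    have h3 : max 0 (Real.log (4 * K / α)) ≤ α / 8 * s := by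
      have h4 := mul_le_mul_of_nonneg_left h1 (by positivity : (0 : ℝ) ≤ α / 8)
      have h5 : α / 8 * (8 / α * max 0 (Real.log (4 * K / α)))
          = max 0 (Real.log (4 * K / α)) := by field_simp
      rw [h5] at h4
      exact h4
    calc Real.log (4 * K / α) ≤ max 0 (Real.log (4 * K / α)) := le_max_right _ _
      _ ≤ α / 8 * s := h3
      _ ≤ α / 8 * s ^ 2 := by nlinarith
  have e1 : Real.exp (L * s - α / 2 * s ^ 2)
      = Real.exp (L * s - α / 8 * s ^ 2) * Real.exp (-(α / 8) * s ^ 2)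
        * Real.exp (-(α / 4) * s ^ 2) := by
    rw [← Real.exp_add, ← Real.exp_add]
    congr 1
    ring
  have hLs : L ≤ α / 8 * s := by
    have h4 := mul_le_mul_of_nonneg_left h8L (by positivity : (0 : ℝ) ≤ α / 8)
    have h5 : α / 8 * (8 * L / α) = L := by field_simp
    rw [h5] at h4
    exact h4
  have e2 : Real.exp (L * s - α / 8 * s ^ 2) ≤ 1 := by
    rw [Real.exp_le_one_iff]
    nlinarith [mul_le_mul_of_nonneg_right hLs hs0]
  have e3 : K * Real.exp (-(α / 8) * s ^ 2) ≤ α / 4 := by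
    have h4 : Real.exp (-(α / 8) * s ^ 2) ≤ Real.exp (-Real.log (4 * K / α)) :=
      Real.exp_le_exp.mpr (by linarith)
    rw [Real.exp_neg, Real.exp_log (by positivity : (0 : ℝ) < 4 * K / α)] at h4
    calc K * Real.exp (-(α / 8) * s ^ 2) ≤ K * (4 * K / α)⁻¹ :=
        mul_le_mul_of_nonneg_left h4 hK.le
      _ = α / 4 := by field_simp
  rw [e1]
  have f1 : K * (Real.exp (L * s - α / 8 * s ^ 2) * Real.exp (-(α / 8) * s ^ 2)
        * Real.exp (-(α / 4) * s ^ 2))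
      = (K * Real.exp (-(α / 8) * s ^ 2)) * Real.exp (L * s - α / 8 * s ^ 2)
        * Real.exp (-(α / 4) * s ^ 2) := by ring
  rw [f1]
  have f2 : (K * Real.exp (-(α / 8) * s ^ 2)) * Real.exp (L * s - α / 8 * s ^ 2)
        * Real.exp (-(α / 4) * s ^ 2)
      ≤ (α / 4) * 1 * Real.exp (-(α / 4) * s ^ 2) := by
    apply mul_le_mul_of_nonneg_right _ (Real.exp_pos _).le
    exact mul_le_mul e3 e2 (Real.exp_pos _).le (by linarith)
  refine f2.trans (le_of_eq ?_)
  ring
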